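/- Let S be a topological semigroup and a ∈ S. Then the set A of cluster points of the sequence (a^n)_{n≥1} is a closed subsemigroup of S, and it is commutative (elements of A commute with each other and with all powers of a). -/

import Mathlib

open Filter Topology

/-- `spow a n` is the power `a ^ n` in a semigroup, for `n ≥ 1` (with `spow a 0 = a`). -/
def spow {S : Type*} [Semigroup S] (a : S) : ℕ → S
  | 0 => a
  | 1 => a
  | (n + 2) => spow a (n + 1) * a

lemma spow_mul_spow {S : Type*} [Semigroup S] (a : S) (n m : ℕ) :
    spow a (n + 1) * spow a (m + 1) = spow a (n + m + 2) := by
  induction m with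
  | zero => rfl
  | succ m ih =>
    have : spow a (m + 2) = spow a (m + 1) * a := rfl
    rw [this, ← mul_assoc, ih]
    rfl

/-- If `x` is a cluster point of `u` along `F`, and `f`, `g` are continuous maps agreeing on
the range of `u`, then `f x = g x`. -/
lemma eq_of_agree_on_range {α S : Type*} [TopologicalSpace S] [T2Space S]
    {u : α → S} {F : Filter α} {x : S} (hx : MapClusterPt x F u)
    {f g : S → S} (hf : Continuous f) (hg : Continuous g)
    (h : ∀ n, f (u n) = g (u n)) : f x = g x := by
  have hne : (𝓝 x ⊓ map u F).NeBot := hx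
  have h1 : Tendsto f (𝓝 x ⊓ map u F) (𝓝 (f x)) := (hf.tendsto x).mono_left inf_le_left
  have h2 : Tendsto g (𝓝 x ⊓ map u F) (𝓝 (g x)) := (hg.tendsto x).mono_left inf_le_left
  have heq : f =ᶠ[𝓝 x ⊓ map u F] g := by
    refine mem_inf_of_right ?_
    rw [mem_map]
    exact Filter.univ_mem' h
  exact tendsto_nhds_unique (h1.congr' heq) h2

/-- Applying a continuous map to a cluster point of a sequence. -/
lemma myMapClusterPt_comp {α S : Type*} [TopologicalSpace S]
    {u : α → S} {F : Filter α} {x : S} (hx : MapClusterPt x F u)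
    {f : S → S} (hf : Continuous f) : MapClusterPt (f x) F (f ∘ u) := by
  have hne : (𝓝 x ⊓ map u F).NeBot := hx
  have hle : map f (𝓝 x ⊓ map u F) ≤ 𝓝 (f x) ⊓ map (f ∘ u) F := by
    refine le_inf ?_ ?_
    · exact ((hf.tendsto x).mono_left inf_le_left : _)
    · rw [← Filter.map_map]
      exact map_mono inf_le_right
  exact neBot_of_le hle

/-- In a Hausdorff topological semigroup, the set `A` of cluster points of the sequence
`(a ^ n)_{n ≥ 1}` is a closed commutative subsemigroup whose elements commute with all
powers of `a`. -/
theorem cluster_points_of_powers {S : Type*} [TopologicalSpace S] [Semigroup S]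
    [ContinuousMul S] [T2Space S] (a : S) :
    IsClosed {x : S | MapClusterPt x atTop (fun n : ℕ => spow a (n + 1))} ∧
    (∀ x ∈ {x : S | MapClusterPt x atTop (fun n : ℕ => spow a (n + 1))},
     ∀ y ∈ {x : S | MapClusterPt x atTop (fun n : ℕ => spow a (n + 1))},
        x * y ∈ {x : S | MapClusterPt x atTop (fun n : ℕ => spow a (n + 1))} ∧
        x * y = y * x) ∧
    (∀ x ∈ {x : S | MapClusterPt x atTop (fun n : ℕ => spow a (n + 1))},
      ∀ n : ℕ, 1 ≤ n → x * spow a n = spow a n * x) := by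
  set u : ℕ → S := fun n : ℕ => spow a (n + 1) with hu
  set A : Set S := {x : S | MapClusterPt x atTop u} with hA
  -- closedness
  have hclosed : IsClosed A := isClosed_setOf_clusterPt
  -- commuting with a
  have hca : ∀ x ∈ A, x * a = a * x := by
    intro x hx
    exact eq_of_agree_on_range hx (continuous_mul_right a) (continuous_mul_left a)
      (fun n => by
        show spow a (n + 1) * a = a * spow a (n + 1)
        have h1 : spow a (n + 1) * a = spow a (n + 2) := rfl
        have h2 : a * spow a (n + 1) = spow a (n + 2) := by
          have := spow_mul_spow a 0 n
          simpa [show spow a 1 = a from rfl] using this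
        rw [h1, h2])
  -- commuting with all powers of a
  have hcp : ∀ x ∈ A, ∀ m : ℕ, x * spow a (m + 1) = spow a (m + 1) * x := by
    intro x hx m
    induction m with
    | zero => exact hca x hx
    | succ m ih =>
      have h1 : spow a (m + 2) = spow a (m + 1) * a := rfl
      rw [h1, ← mul_assoc, ih, mul_assoc, hca x hx, ← mul_assoc]
  -- x * spow a (m+1) ∈ A for x ∈ A
  have hxa : ∀ x ∈ A, ∀ m : ℕ, x * spow a (m + 1) ∈ A := by
    intro x hx m
    have h := myMapClusterPt_comp hx (continuous_mul_right (spow a (m + 1)))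
    have hfun : (fun s => s * spow a (m + 1)) ∘ u = u ∘ (fun n => n + (m + 1)) := by
      funext n
      show u n * spow a (m + 1) = u (n + (m + 1))
      rw [hu]
      simp only
      rw [spow_mul_spow a n m]
      congr 1
    have : MapClusterPt (x * spow a (m + 1)) atTop (u ∘ fun n => n + (m + 1)) := by
      rw [← hfun]; exact h
    have hmap : map (u ∘ fun n => n + (m + 1)) atTop = map u atTop := by
      rw [← Filter.map_map, map_add_atTop_eq_nat]
    have h2 : ClusterPt (x * spow a (m + 1)) (map (u ∘ fun n => n + (m + 1)) atTop) := this
    rw [hmap] at h2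
    exact h2
  constructor
  · exact hclosed
  constructor
  · intro x hx y hy
    constructor
    · -- x * y ∈ A
      have hyc : y ∈ closure (Set.range u) := by
        have : ClusterPt y (map u atTop) := hy
        rw [mem_closure_iff_clusterPt]
        exact this.mono (le_principal_iff.2 (mem_map.2 (Filter.univ_mem' fun n =>
          Set.mem_range_self n)))
      have h1 : x * y ∈ (fun s => x * s) '' closure (Set.range u) :=
        ⟨y, hyc, rfl⟩
      have h2 : (fun s => x * s) '' closure (Set.range u) ⊆
          closure ((fun s => x * s) '' Set.range u) :=
        image_closure_subset_closure_image (continuous_mul_left x)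
      have h3 : (fun s => x * s) '' Set.range u ⊆ A := by
        rintro _ ⟨_, ⟨n, rfl⟩, rfl⟩
        have := hxa x hx n
        rw [hcp x hx n] at this
        have h4 : spow a (n + 1) * x = x * u n := (hcp x hx n).symm
        rw [← hcp x hx n] at this
        exact this
      have h5 : closure ((fun s => x * s) '' Set.range u) ⊆ A :=
        closure_minimal h3 hclosed
      exact h5 (h2 h1)
    · -- x * y = y * x
      exact eq_of_agree_on_range hy (continuous_mul_left x) (continuous_mul_right x)
        (fun n => hcp x hx n)
  · intro x hx n hn
    obtain ⟨m, rfl⟩ : ∃ m, n = m + 1 := ⟨n - 1, by omega⟩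
    exact hcp x hx m
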